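/- In one dimension, no monotone binary cellular automaton and its dual are both eroders: if A is a monotone binary cellular automaton on ℤ with finite neighborhood, transition function g satisfying g(all-zero) = 0 and g(all-one) = 1, and A is an eroder, then the dual automaton A* (with transition function g*(u) = 1 − g(1 − u)) is not an eroder. -/

import Mathlib

/-- The transition operator of a one-dimensional cellular automaton with transition
function `g`: `(Dξ)(x) = g(u ↦ ξ(x+u))`. -/
def transOp1 (g : (ℤ → Bool) → Bool) (ξ : ℤ → Bool) : ℤ → Bool :=
  fun x => g (fun u => ξ (x + u))

private lemma bool_true_le' {b : Bool} (h : true ≤ b) : b = true := by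
  cases b
  · exact absurd h (by decide)
  · rfl

private lemma bool_le_or (a b : Bool) : b ≤ (a || b) := by
  cases a <;> cases b <;> decide

private lemma bool_not_le {a b : Bool} (h : a ≤ b) : (!b) ≤ (!a) := by
  cases a <;> cases b <;> revert h <;> decide

/-- Survival lemma: if there is a fault line `k` such that both the up-step at `k`
and the down-step at `k` map to `1`, then a block of ones of width `2r` persists
forever, moving with velocity `-k`. -/
private lemma survive (U : Finset ℤ) (g : (ℤ → Bool) → Bool)
    (hloc : ∀ ξ ξ' : ℤ → Bool, (∀ u ∈ U, ξ u = ξ' u) → g ξ = g ξ')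
    (hmono : Monotone g) (r : ℤ) (hU : ∀ u ∈ U, -r ≤ u ∧ u ≤ r)
    (k : ℤ)
    (hu : g (fun u => decide (k ≤ u)) = true)
    (hd : g (fun u => decide (u ≤ k)) = true)
    (t : ℕ) :
    ∀ x : ℤ, -(t : ℤ) * k ≤ x → x ≤ -(t : ℤ) * k + 2 * r →
      ((transOp1 g)^[t] (fun y => decide (0 ≤ y ∧ y ≤ 2 * r))) x = true := by
  induction t with
  | zero =>
      intro x h1 h2
      simp only [Function.iterate_zero_apply, decide_eq_true_eq]
      simp only [Nat.cast_zero, neg_zero, zero_mul] at h1 h2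
      omega
  | succ t ih =>
      intro x h1 h2
      have hc : (-(↑(t + 1) : ℤ) * k) = -(t : ℤ) * k - k := by push_cast; ring
      rw [hc] at h1 h2
      set c : ℤ := -(t : ℤ) * k with hc'
      rw [Function.iterate_succ_apply']
      set ξt := (transOp1 g)^[t] (fun y => decide (0 ≤ y ∧ y ≤ 2 * r)) with hξt
      show g (fun u => ξt (x + u)) = true
      rcases le_total x (c + r) with hx | hx
      · -- compare with the up-step
        have he : g (fun u => ξt (x + u)) = g (fun u => ξt (x + u) || decide (k ≤ u)) := by
          apply hloc
          intro u hu'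
          rcases le_or_gt k u with h | h
          · have hone' : ξt (x + u) = true := by
              apply ih
              · have := (hU u hu').1; omega
              · have := (hU u hu').2; omega
            simp [hone', h]
          · simp [show ¬ (k ≤ u) from not_le.mpr h]
        rw [he]
        apply bool_true_le'
        have hle : (fun u : ℤ => decide (k ≤ u)) ≤ (fun u => ξt (x + u) || decide (k ≤ u)) :=
          fun u => bool_le_or _ _
        calc (true : Bool) = g (fun u => decide (k ≤ u)) := hu.symm
          _ ≤ g (fun u => ξt (x + u) || decide (k ≤ u)) := hmono hle
      · -- compare with the down-step
        have he : g (fun u => ξt (x + u)) = g (fun u => ξt (x + u) || decide (u ≤ k)) := by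
          apply hloc
          intro u hu'
          rcases le_or_gt u k with h | h
          · have hone' : ξt (x + u) = true := by
              apply ih
              · have := (hU u hu').1; omega
              · have := (hU u hu').2; omega
            simp [hone', h]
          · simp [show ¬ (u ≤ k) from not_le.mpr h]
        rw [he]
        apply bool_true_le'
        have hle : (fun u : ℤ => decide (u ≤ k)) ≤ (fun u => ξt (x + u) || decide (u ≤ k)) :=
          fun u => bool_le_or _ _
        calc (true : Bool) = g (fun u => decide (u ≤ k)) := hd.symm
          _ ≤ g (fun u => ξt (x + u) || decide (u ≤ k)) := hmono hle

/-- Discrete intermediate value: a boolean function true at `m` and false at `m + n`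
has a true-to-false transition. -/
private lemma bool_ivt (f : ℤ → Bool) : ∀ (n : ℕ) (m : ℤ), f m = true → f (m + n) = false →
    ∃ k : ℤ, f k = true ∧ f (k + 1) = false := by
  intro n
  induction n with
  | zero =>
      intro m hm hM
      rw [show (m + ((0 : ℕ) : ℤ)) = m by push_cast; ring] at hM
      rw [hm] at hM; cases hM
  | succ n ih =>
      intro m hm hM
      rcases Bool.eq_false_or_eq_true (f (m + 1)) with h | h
      · apply ih (m + 1) h
        rw [show (m + 1 + (n : ℤ)) = m + ((n + 1 : ℕ) : ℤ) by push_cast; ring]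
        exact hM
      · exact ⟨m, hm, h⟩

/-- If there is a common fault line for a local monotone rule, it is not an eroder. -/
private lemma not_eroder (U : Finset ℤ) (g : (ℤ → Bool) → Bool)
    (hloc : ∀ ξ ξ' : ℤ → Bool, (∀ u ∈ U, ξ u = ξ' u) → g ξ = g ξ')
    (hmono : Monotone g) (r : ℤ) (hr : 0 ≤ r) (hU : ∀ u ∈ U, -r ≤ u ∧ u ≤ r)
    (k : ℤ)
    (hu : g (fun u => decide (k ≤ u)) = true)
    (hd : g (fun u => decide (u ≤ k)) = true)
    (her : ∀ ξ : ℤ → Bool, Set.Finite {x | ξ x = true} →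
      ∃ t : ℕ, (transOp1 g)^[t] ξ = fun _ => false) : False := by
  obtain ⟨t, ht⟩ := her (fun y => decide (0 ≤ y ∧ y ≤ 2 * r)) (by
    apply (Set.finite_Icc (0 : ℤ) (2 * r)).subset
    intro x hx
    simp only [Set.mem_setOf_eq, decide_eq_true_eq] at hx
    exact ⟨hx.1, hx.2⟩)
  have hs := survive U g hloc hmono r hU k hu hd t (-(t : ℤ) * k) le_rfl (by linarith)
  rw [ht] at hs
  cases hs

theorem one_dim_dual_not_eroder (U : Finset ℤ) (g : (ℤ → Bool) → Bool)
    (hloc : ∀ ξ ξ' : ℤ → Bool, (∀ u ∈ U, ξ u = ξ' u) → g ξ = g ξ')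
    (hmono : Monotone g)
    (hzero : g (fun _ => false) = false)
    (hone : g (fun _ => true) = true)
    (herode : ∀ ξ : ℤ → Bool, Set.Finite {x | ξ x = true} →
      ∃ t : ℕ, (transOp1 g)^[t] ξ = fun _ => false) :
    ¬ (∀ ξ : ℤ → Bool, Set.Finite {x | ξ x = true} →
        ∃ t : ℕ, (transOp1 (fun u => !g (fun s => !u s)))^[t] ξ = fun _ => false) := by
  intro hdual
  -- the neighborhood must be nonempty
  rcases U.eq_empty_or_nonempty with hUe | hne
  · have : g (fun _ => false) = g (fun _ => true) := by
      apply hloc; intro u hu; rw [hUe] at hu; cases hu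
    rw [hzero, hone] at this; cases this
  -- a radius bound for the neighborhood
  have hminmax : U.min' hne ≤ U.max' hne := U.min'_le _ (U.max'_mem hne)
  set r : ℤ := max (U.max' hne) (-(U.min' hne)) with hr'
  have hr : 0 ≤ r := by
    have := hminmax
    rcases le_total (U.max' hne) (-(U.min' hne)) with h | h <;> omega
  have hU : ∀ u ∈ U, -r ≤ u ∧ u ≤ r := by
    intro u hu
    have h1 := U.min'_le u hu
    have h2 := U.le_max' u hu
    constructor <;> omega
  -- the dual rule
  set g' : (ℤ → Bool) → Bool := fun u => !g (fun s => !u s) with hg'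
  have hloc' : ∀ ξ ξ' : ℤ → Bool, (∀ u ∈ U, ξ u = ξ' u) → g' ξ = g' ξ' := by
    intro ξ ξ' h
    simp only [hg']
    congr 1
    apply hloc
    intro u hu; rw [h u hu]
  have hmono' : Monotone g' := by
    intro a b hab
    simp only [hg']
    apply bool_not_le
    exact hmono (fun u => bool_not_le (hab u))
  by_cases h1 : ∃ k : ℤ, g' (fun u => decide (k ≤ u)) = true ∧ g' (fun u => decide (u ≤ k)) = true
  · obtain ⟨k, hk1, hk2⟩ := h1
    exact not_eroder U g' hloc' hmono' r hr hU k hk1 hk2 hdual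
  by_cases h2 : ∃ k : ℤ, g (fun u => decide (k ≤ u)) = true ∧ g (fun u => decide (u ≤ k)) = true
  · obtain ⟨k, hk1, hk2⟩ := h2
    exact not_eroder U g hloc hmono r hr hU k hk1 hk2 herode
  push_neg at h1 h2
  -- intermediate value for the up-step value function
  have hm : g (fun u => decide (U.min' hne ≤ u)) = true := by
    rw [← hone]; apply hloc
    intro u hu; simp [U.min'_le u hu]
  have hM : g (fun u => decide (U.max' hne + 1 ≤ u)) = false := by
    rw [← hzero]; apply hloc
    intro u hu
    have := U.le_max' u hu
    simp only [decide_eq_false_iff_not]; omega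
  obtain ⟨k, hk1, hk2⟩ := bool_ivt (fun k => g (fun u => decide (k ≤ u)))
    (U.max' hne + 1 - U.min' hne).toNat (U.min' hne) hm (by
      rw [show (U.min' hne + ((U.max' hne + 1 - U.min' hne).toNat : ℤ)) = U.max' hne + 1 by omega]
      exact hM)
  -- g (down-step k) is false
  have hdk : g (fun u => decide (u ≤ k)) = false := by
    cases hb : g (fun u => decide (u ≤ k))
    · rfl
    · exact absurd hb (h2 k hk1)
  -- hence g (down-step (k-1)) is false by monotonicity
  have hdk' : g (fun u => decide (u ≤ k - 1)) = false := by
    have hle : (fun u : ℤ => decide (u ≤ k - 1)) ≤ (fun u => decide (u ≤ k)) := by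
      intro u
      rcases le_or_gt u (k - 1) with h | h
      · simp [h, show u ≤ k by omega]
      · simp [show ¬ (u ≤ k - 1) from by omega]
    have := hmono hle
    rw [hdk] at this
    cases hb : g (fun u => decide (u ≤ k - 1))
    · rfl
    · rw [hb] at this; exact absurd this (by decide)
  -- but then k is a common fault line for the dual: contradiction with h1
  have e1 : g' (fun u => decide (k ≤ u)) = true := by
    simp only [hg']
    rw [show (fun s : ℤ => !decide (k ≤ s)) = (fun s : ℤ => decide (s ≤ k - 1)) from
      funext fun s => by rcases le_or_gt k s with h | h <;>
        simp [h, show (s ≤ k - 1) ↔ ¬ (k ≤ s) from by omega]]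
    rw [hdk']
    rfl
  have e2 : g' (fun u => decide (u ≤ k)) = true := by
    simp only [hg']
    rw [show (fun s : ℤ => !decide (s ≤ k)) = (fun s : ℤ => decide (k + 1 ≤ s)) from
      funext fun s => by rcases le_or_gt s k with h | h <;>
        simp [h, show (k + 1 ≤ s) ↔ ¬ (s ≤ k) from by omega]]
    rw [hk2]
    rfl
  exact h1 k e1 e2
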